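/- Let I be a nonempty open real interval, γ ∈ ℝ, and let u,v,w,z : I → ℝ be solutions of the second-order linear differential equation F'' = γF such that v > 0 and z > 0 on I and the pairs {u,v} and {w,z} are each linearly independent. Assume that the functions f,g : I → ℝ, p = (p₁,p₂) : I → ℝ₊², and q = (q₁,q₂) : I → ℝ₊² satisfy f = u/v, g = w/z, and p₁q₁ = p₂q₂ = vz on I. Then f and g are strictly monotone and continuous, and the invariance equation A_{f,p}(x,y) + A_{g,q}(x,y) = x + y holds for all x,y ∈ I. -/

import Mathlib

open Set

/-- Generalized cosine: solution of `F'' = γ F` with `F 0 = 1`, `F' 0 = 0`. -/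
noncomputable def Cg (γ t : ℝ) : ℝ :=
  if 0 ≤ γ then Real.cosh (Real.sqrt γ * t) else Real.cos (Real.sqrt (-γ) * t)

/-- Generalized sine: solution of `F'' = γ F` with `F 0 = 0`, `F' 0 = 1`. -/
noncomputable def Sg (γ t : ℝ) : ℝ :=
  if γ = 0 then t
  else if 0 ≤ γ then Real.sinh (Real.sqrt γ * t) / Real.sqrt γ
  else Real.sin (Real.sqrt (-γ) * t) / Real.sqrt (-γ)

lemma Cg_zero (γ : ℝ) : Cg γ 0 = 1 := by
  unfold Cg; split <;> simp

lemma Sg_zero (γ : ℝ) : Sg γ 0 = 0 := by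
  unfold Sg; split
  · rfl
  · split <;> simp

lemma Sg_neg (γ t : ℝ) : Sg γ (-t) = - Sg γ t := by
  unfold Sg; split
  · rfl
  · split <;> simp [mul_neg, Real.sinh_neg, Real.sin_neg, neg_div]

lemma Cg_sq_sub (γ t : ℝ) : Cg γ t ^ 2 - γ * Sg γ t ^ 2 = 1 := by
  unfold Cg Sg
  rcases lt_trichotomy γ 0 with h | h | h
  · simp only [if_neg (not_le.mpr h), if_neg h.ne]
    have hpos : (0:ℝ) < Real.sqrt (-γ) := Real.sqrt_pos.mpr (by linarith)
    have hs : Real.sqrt (-γ) ^ 2 = -γ := Real.sq_sqrt (by linarith)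
    have hne : Real.sqrt (-γ) ≠ 0 := hpos.ne'
    rw [div_pow, hs]
    have h2 : γ * (Real.sin (Real.sqrt (-γ) * t) ^ 2 / -γ) = - Real.sin (Real.sqrt (-γ) * t) ^ 2 := by
      rw [div_neg, mul_neg, mul_comm γ, div_mul_cancel₀ _ h.ne]
    rw [h2]
    have := Real.sin_sq_add_cos_sq (Real.sqrt (-γ) * t)
    linarith
  · simp [h]
  · simp only [if_pos h.le, if_neg h.ne']
    have hpos : (0:ℝ) < Real.sqrt γ := Real.sqrt_pos.mpr h
    have hs : Real.sqrt γ ^ 2 = γ := Real.sq_sqrt h.le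
    have hne : Real.sqrt γ ≠ 0 := hpos.ne'
    rw [div_pow, hs]
    have h2 : γ * (Real.sinh (Real.sqrt γ * t) ^ 2 / γ) = Real.sinh (Real.sqrt γ * t) ^ 2 := by
      rw [mul_comm γ, div_mul_cancel₀ _ h.ne']
    rw [h2]
    have := Real.cosh_sq_sub_sinh_sq (Real.sqrt γ * t)
    linarith

lemma Cg_mul_Sg_sub (γ a b : ℝ) :
    Cg γ a * Sg γ b - Sg γ a * Cg γ b = Sg γ (b - a) := by
  unfold Cg Sg
  rcases lt_trichotomy γ 0 with h | h | h
  · simp only [if_neg (not_le.mpr h), if_neg h.ne]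
    have hpos : (0:ℝ) < Real.sqrt (-γ) := Real.sqrt_pos.mpr (by linarith)
    have hne : Real.sqrt (-γ) ≠ 0 := hpos.ne'
    rw [mul_sub, Real.sin_sub]
    field_simp
  · simp [h]
  · simp only [if_pos h.le, if_neg h.ne']
    have hpos : (0:ℝ) < Real.sqrt γ := Real.sqrt_pos.mpr h
    have hne : Real.sqrt γ ≠ 0 := hpos.ne'
    rw [mul_sub, Real.sinh_sub]
    field_simp

lemma hasDerivAt_Sg (γ t : ℝ) : HasDerivAt (Sg γ) (Cg γ t) t := by
  unfold Cg Sg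
  rcases lt_trichotomy γ 0 with h | h | h
  · simp only [if_neg (not_le.mpr h), if_neg h.ne]
    have hpos : (0:ℝ) < Real.sqrt (-γ) := Real.sqrt_pos.mpr (by linarith)
    have hne : Real.sqrt (-γ) ≠ 0 := hpos.ne'
    have h1 : HasDerivAt (fun t : ℝ => Real.sin (Real.sqrt (-γ) * t))
        (Real.cos (Real.sqrt (-γ) * t) * Real.sqrt (-γ)) t :=
      (Real.hasDerivAt_sin _).comp t (by simpa using (hasDerivAt_id t).const_mul (Real.sqrt (-γ)))
    have := h1.div_const (Real.sqrt (-γ))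
    rwa [mul_div_cancel_right₀ _ hne] at this
  · simpa [h] using (hasDerivAt_id' t)
  · simp only [if_pos h.le, if_neg h.ne']
    have hpos : (0:ℝ) < Real.sqrt γ := Real.sqrt_pos.mpr h
    have hne : Real.sqrt γ ≠ 0 := hpos.ne'
    have h1 : HasDerivAt (fun t : ℝ => Real.sinh (Real.sqrt γ * t))
        (Real.cosh (Real.sqrt γ * t) * Real.sqrt γ) t :=
      (Real.hasDerivAt_sinh _).comp t (by simpa using (hasDerivAt_id t).const_mul (Real.sqrt γ))
    have := h1.div_const (Real.sqrt γ)
    rwa [mul_div_cancel_right₀ _ hne] at this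

lemma hasDerivAt_Cg (γ t : ℝ) : HasDerivAt (Cg γ) (γ * Sg γ t) t := by
  unfold Cg Sg
  rcases lt_trichotomy γ 0 with h | h | h
  · simp only [if_neg (not_le.mpr h), if_neg h.ne]
    have hpos : (0:ℝ) < Real.sqrt (-γ) := Real.sqrt_pos.mpr (by linarith)
    have hne : Real.sqrt (-γ) ≠ 0 := hpos.ne'
    have hs : Real.sqrt (-γ) ^ 2 = -γ := Real.sq_sqrt (by linarith)
    have h1 : HasDerivAt (fun t : ℝ => Real.cos (Real.sqrt (-γ) * t))
        (-Real.sin (Real.sqrt (-γ) * t) * Real.sqrt (-γ)) t :=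
      (Real.hasDerivAt_cos _).comp t (by simpa using (hasDerivAt_id t).const_mul (Real.sqrt (-γ)))
    convert h1 using 1
    field_simp
    linear_combination Real.sin (Real.sqrt (-γ) * t) * hs
  · simpa [h] using (hasDerivAt_const t (1:ℝ))
  · simp only [if_pos h.le, if_neg h.ne']
    have hpos : (0:ℝ) < Real.sqrt γ := Real.sqrt_pos.mpr h
    have hne : Real.sqrt γ ≠ 0 := hpos.ne'
    have hs : Real.sqrt γ ^ 2 = γ := Real.sq_sqrt h.le
    have h1 : HasDerivAt (fun t : ℝ => Real.cosh (Real.sqrt γ * t))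
        (Real.sinh (Real.sqrt γ * t) * Real.sqrt γ) t :=
      (Real.hasDerivAt_cosh _).comp t (by simpa using (hasDerivAt_id t).const_mul (Real.sqrt γ))
    convert h1 using 1
    field_simp
    linear_combination (-Real.sinh (Real.sqrt γ * t)) * hs
lemma const_of_hasDerivAt_zero {I : Set ℝ} (hIopen : IsOpen I) (hIconn : I.OrdConnected)
    {F : ℝ → ℝ} (hF : ∀ x ∈ I, HasDerivAt F 0 x) {a b : ℝ} (ha : a ∈ I) (hb : b ∈ I) :
    F a = F b := by
  have hconv : Convex ℝ I := convex_iff_ordConnected.mpr hIconn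
  refine hconv.is_const_of_fderivWithin_eq_zero (fun x hx => ((hF x hx).differentiableAt).differentiableWithinAt) (fun x hx => ?_) ha hb
  rw [fderivWithin_of_isOpen hIopen hx]
  have h1 := (hF x hx).hasFDerivAt.fderiv
  rw [h1]
  ext
  simp

/-- Wronskian of two solutions of `F'' = γ F` is constant. -/
lemma wronskian_const {I : Set ℝ} (hIopen : IsOpen I) (hIconn : I.OrdConnected) {γ : ℝ}
    {F F' G G' : ℝ → ℝ}
    (hF : ∀ x ∈ I, HasDerivAt F (F' x) x) (hF' : ∀ x ∈ I, HasDerivAt F' (γ * F x) x)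
    (hG : ∀ x ∈ I, HasDerivAt G (G' x) x) (hG' : ∀ x ∈ I, HasDerivAt G' (γ * G x) x)
    {a b : ℝ} (ha : a ∈ I) (hb : b ∈ I) :
    F' a * G a - F a * G' a = F' b * G b - F b * G' b := by
  refine const_of_hasDerivAt_zero hIopen hIconn (F := fun x => F' x * G x - F x * G' x)
    (fun x hx => ?_) ha hb
  have h := ((hF' x hx).mul (hG x hx)).sub ((hF x hx).mul (hG' x hx))
  refine h.congr_deriv ?_
  ring

/-- Representation of a solution of `F'' = γ F` in terms of `Cg` and `Sg`. -/
lemma sol_rep {I : Set ℝ} (hIopen : IsOpen I) (hIconn : I.OrdConnected) {γ : ℝ}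
    {F F' : ℝ → ℝ}
    (hF : ∀ x ∈ I, HasDerivAt F (F' x) x) (hF' : ∀ x ∈ I, HasDerivAt F' (γ * F x) x)
    {x₀ : ℝ} (hx₀ : x₀ ∈ I) {x : ℝ} (hx : x ∈ I) :
    F x = F x₀ * Cg γ (x - x₀) + F' x₀ * Sg γ (x - x₀) := by
  have hS : ∀ y ∈ I, HasDerivAt (fun y => Sg γ (y - x₀)) (Cg γ (y - x₀)) y := by
    intro y _
    simpa [Function.comp_def] using (hasDerivAt_Sg γ (y - x₀)).comp y ((hasDerivAt_id y).sub_const x₀)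
  have hC : ∀ y ∈ I, HasDerivAt (fun y => Cg γ (y - x₀)) (γ * Sg γ (y - x₀)) y := by
    intro y _
    simpa [Function.comp_def] using (hasDerivAt_Cg γ (y - x₀)).comp y ((hasDerivAt_id y).sub_const x₀)
  have hC' : ∀ y ∈ I, HasDerivAt (fun y => γ * Sg γ (y - x₀)) (γ * Cg γ (y - x₀)) y := by
    intro y hy
    simpa [mul_comm] using (hS y hy).const_mul γ
  have e1 := wronskian_const hIopen hIconn hF hF' hS hC hx hx₀
  have e2 := wronskian_const hIopen hIconn hF hF' hC hC' hx hx₀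
  simp only [sub_self, Sg_zero, Cg_zero, mul_zero, mul_one, zero_sub, sub_zero] at e1 e2
  have pyth := Cg_sq_sub γ (x - x₀)
  linear_combination (-(Cg γ (x - x₀))) * e1 + Sg γ (x - x₀) * e2 - F x * pyth
/-- Package: strict monotonicity, continuity, nonvanishing Wronskian and the bracket formula. -/
lemma solPack {I : Set ℝ} (hIopen : IsOpen I) (hIconn : I.OrdConnected) {γ : ℝ}
    {x₀ : ℝ} (hx₀ : x₀ ∈ I) {u v f : ℝ → ℝ}
    (hu : ∀ x ∈ I, HasDerivAt u (deriv u x) x)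
    (hu' : ∀ x ∈ I, HasDerivAt (deriv u) (γ * u x) x)
    (hv : ∀ x ∈ I, HasDerivAt v (deriv v x) x)
    (hv' : ∀ x ∈ I, HasDerivAt (deriv v) (γ * v x) x)
    (hvpos : ∀ x ∈ I, 0 < v x)
    (huvind : ∀ a b : ℝ, (∀ x ∈ I, a * u x + b * v x = 0) → a = 0 ∧ b = 0)
    (hf : ∀ x ∈ I, f x = u x / v x) :
    (StrictMonoOn f I ∨ StrictAntiOn f I) ∧ ContinuousOn f I ∧
      (u x₀ * deriv v x₀ - deriv u x₀ * v x₀ ≠ 0) ∧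
      (∀ a ∈ I, ∀ b ∈ I, u a * v b - u b * v a =
        (u x₀ * deriv v x₀ - deriv u x₀ * v x₀) * Sg γ (b - a)) := by
  set D := u x₀ * deriv v x₀ - deriv u x₀ * v x₀ with hD
  have hconv : Convex ℝ I := convex_iff_ordConnected.mpr hIconn
  -- bracket formula
  have hbr : ∀ a ∈ I, ∀ b ∈ I, u a * v b - u b * v a = D * Sg γ (b - a) := by
    intro a ha b hb
    have hua := sol_rep hIopen hIconn hu hu' hx₀ ha
    have hub := sol_rep hIopen hIconn hu hu' hx₀ hb
    have hva := sol_rep hIopen hIconn hv hv' hx₀ ha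
    have hvb := sol_rep hIopen hIconn hv hv' hx₀ hb
    have add := Cg_mul_Sg_sub γ (a - x₀) (b - x₀)
    rw [show b - x₀ - (a - x₀) = b - a by ring] at add
    rw [hua, hub, hva, hvb, hD]
    linear_combination (u x₀ * deriv v x₀ - deriv u x₀ * v x₀) * add
  -- nonvanishing Wronskian
  have hDne : D ≠ 0 := by
    intro h0
    have hres := huvind (v x₀) (-(u x₀)) (fun x hx => by
      have hux := sol_rep hIopen hIconn hu hu' hx₀ hx
      have hvx := sol_rep hIopen hIconn hv hv' hx₀ hx
      rw [hux, hvx]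
      linear_combination (-(Sg γ (x - x₀))) * h0)
    exact (hvpos x₀ hx₀).ne' hres.1
  -- derivative of f
  have hdf : ∀ x ∈ I, HasDerivAt f (-D / v x ^ 2) x := by
    intro x hx
    have hd := (hu x hx).div (hv x hx) (hvpos x hx).ne'
    have hW : deriv u x * v x - u x * deriv v x = -D := by
      have := wronskian_const hIopen hIconn hu hu' hv hv' hx hx₀
      rw [hD]; linarith
    rw [hW] at hd
    refine hd.congr_of_eventuallyEq ?_
    filter_upwards [hIopen.mem_nhds hx] with y hy
    exact hf y hy
  have hcont : ContinuousOn f I := fun x hx => (hdf x hx).continuousAt.continuousWithinAt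
  refine ⟨?_, hcont, hDne, hbr⟩
  rcases hDne.lt_or_gt with hlt | hlt
  · left
    refine strictMonoOn_of_deriv_pos hconv hcont (fun x hx => ?_)
    rw [hIopen.interior_eq] at hx
    rw [(hdf x hx).deriv]
    have := hvpos x hx
    exact div_pos (by linarith) (by positivity)
  · right
    refine strictAntiOn_of_deriv_neg hconv hcont (fun x hx => ?_)
    rw [hIopen.interior_eq] at hx
    rw [(hdf x hx).deriv]
    have h2 := hvpos x hx
    have : (0:ℝ) < v x ^ 2 := by positivity
    exact div_neg_of_neg_of_pos (by linarith) this
/-- The 2-variable generalized Bajraktarević mean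
`A_{f,p}(x,y) = f⁻¹((p₁(x)f(x)+p₂(y)f(y))/(p₁(x)+p₂(y)))`,
where the inverse of `f` is taken on the interval `I`. -/
noncomputable def bajMean (I : Set ℝ) (f p₁ p₂ : ℝ → ℝ) (x y : ℝ) : ℝ :=
  Function.invFunOn f I ((p₁ x * f x + p₂ y * f y) / (p₁ x + p₂ y))

theorem stmt4 (I : Set ℝ) (hIopen : IsOpen I) (hIne : I.Nonempty) (hIconn : I.OrdConnected)
    (γ : ℝ) (u v w z : ℝ → ℝ)
    (hu1 : ∀ x ∈ I, DifferentiableAt ℝ u x) (hu2 : ∀ x ∈ I, DifferentiableAt ℝ (deriv u) x)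
    (huODE : ∀ x ∈ I, deriv (deriv u) x = γ * u x)
    (hv1 : ∀ x ∈ I, DifferentiableAt ℝ v x) (hv2 : ∀ x ∈ I, DifferentiableAt ℝ (deriv v) x)
    (hvODE : ∀ x ∈ I, deriv (deriv v) x = γ * v x)
    (hw1 : ∀ x ∈ I, DifferentiableAt ℝ w x) (hw2 : ∀ x ∈ I, DifferentiableAt ℝ (deriv w) x)
    (hwODE : ∀ x ∈ I, deriv (deriv w) x = γ * w x)
    (hz1 : ∀ x ∈ I, DifferentiableAt ℝ z x) (hz2 : ∀ x ∈ I, DifferentiableAt ℝ (deriv z) x)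
    (hzODE : ∀ x ∈ I, deriv (deriv z) x = γ * z x)
    (hvpos : ∀ x ∈ I, 0 < v x) (hzpos : ∀ x ∈ I, 0 < z x)
    (huvind : ∀ a b : ℝ, (∀ x ∈ I, a * u x + b * v x = 0) → a = 0 ∧ b = 0)
    (hwzind : ∀ a b : ℝ, (∀ x ∈ I, a * w x + b * z x = 0) → a = 0 ∧ b = 0)
    (f g p₁ p₂ q₁ q₂ : ℝ → ℝ)
    (hp : ∀ x ∈ I, 0 < p₁ x ∧ 0 < p₂ x) (hq : ∀ x ∈ I, 0 < q₁ x ∧ 0 < q₂ x)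
    (hf : ∀ x ∈ I, f x = u x / v x) (hg : ∀ x ∈ I, g x = w x / z x)
    (hpq : ∀ x ∈ I, p₁ x * q₁ x = v x * z x ∧ p₂ x * q₂ x = v x * z x) :
    (StrictMonoOn f I ∨ StrictAntiOn f I) ∧ ContinuousOn f I ∧
    (StrictMonoOn g I ∨ StrictAntiOn g I) ∧ ContinuousOn g I ∧
    (∀ x ∈ I, ∀ y ∈ I,
      bajMean I f p₁ p₂ x y + bajMean I g q₁ q₂ x y = x + y) := by
  obtain ⟨x₀, hx₀⟩ := hIne
  have hu : ∀ x ∈ I, HasDerivAt u (deriv u x) x := fun x hx => (hu1 x hx).hasDerivAt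
  have hu' : ∀ x ∈ I, HasDerivAt (deriv u) (γ * u x) x := fun x hx =>
    huODE x hx ▸ (hu2 x hx).hasDerivAt
  have hv : ∀ x ∈ I, HasDerivAt v (deriv v x) x := fun x hx => (hv1 x hx).hasDerivAt
  have hv' : ∀ x ∈ I, HasDerivAt (deriv v) (γ * v x) x := fun x hx =>
    hvODE x hx ▸ (hv2 x hx).hasDerivAt
  have hw : ∀ x ∈ I, HasDerivAt w (deriv w x) x := fun x hx => (hw1 x hx).hasDerivAt
  have hw' : ∀ x ∈ I, HasDerivAt (deriv w) (γ * w x) x := fun x hx =>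
    hwODE x hx ▸ (hw2 x hx).hasDerivAt
  have hz : ∀ x ∈ I, HasDerivAt z (deriv z x) x := fun x hx => (hz1 x hx).hasDerivAt
  have hz' : ∀ x ∈ I, HasDerivAt (deriv z) (γ * z x) x := fun x hx =>
    hzODE x hx ▸ (hz2 x hx).hasDerivAt
  obtain ⟨hfmono, hfcont, hDf, hbrf⟩ :=
    solPack hIopen hIconn hx₀ hu hu' hv hv' hvpos huvind hf
  obtain ⟨hgmono, hgcont, hDg, hbrg⟩ :=
    solPack hIopen hIconn hx₀ hw hw' hz hz' hzpos hwzind hg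
  set Df := u x₀ * deriv v x₀ - deriv u x₀ * v x₀ with hDfdef
  set Dg := w x₀ * deriv z x₀ - deriv w x₀ * z x₀ with hDgdef
  have hinjf : Set.InjOn f I := by rcases hfmono with h | h; exacts [h.injOn, h.injOn]
  have hinjg : Set.InjOn g I := by rcases hgmono with h | h; exacts [h.injOn, h.injOn]
  refine ⟨hfmono, hfcont, hgmono, hgcont, ?_⟩
  intro x hx y hy
  obtain ⟨hp1, _⟩ := hp x hx
  obtain ⟨_, hp2⟩ := hp y hy
  obtain ⟨hq1, _⟩ := hq x hx
  obtain ⟨_, hq2⟩ := hq y hy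
  have hden : (0:ℝ) < p₁ x + p₂ y := by linarith
  have hqden : (0:ℝ) < q₁ x + q₂ y := by linarith
  set m := (p₁ x * f x + p₂ y * f y) / (p₁ x + p₂ y) with hmdef
  have hsub : uIcc x y ⊆ I := hIconn.uIcc_subset hx hy
  -- `m` lies between `f x` and `f y`
  have hub : m ≤ max (f x) (f y) := by
    rw [hmdef, div_le_iff₀ hden]
    nlinarith [le_max_left (f x) (f y), le_max_right (f x) (f y)]
  have hlb : min (f x) (f y) ≤ m := by
    rw [hmdef, le_div_iff₀ hden]
    nlinarith [min_le_left (f x) (f y), min_le_right (f x) (f y)]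
  have hmem : m ∈ uIcc (f x) (f y) := by
    rcases le_total (f x) (f y) with h | h
    · rw [uIcc_of_le h]
      exact ⟨by simpa [min_eq_left h] using hlb, by simpa [max_eq_right h] using hub⟩
    · rw [uIcc_of_ge h]
      exact ⟨by simpa [min_eq_right h] using hlb, by simpa [max_eq_left h] using hub⟩
  obtain ⟨t, htuIcc, hft⟩ := intermediate_value_uIcc (hfcont.mono hsub) hmem
  have htI : t ∈ I := hsub htuIcc
  have hsI : x + y - t ∈ I := by
    apply hsub
    rcases le_total x y with h | h
    · rw [uIcc_of_le h] at htuIcc ⊢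
      exact ⟨by linarith [htuIcc.2], by linarith [htuIcc.1]⟩
    · rw [uIcc_of_ge h] at htuIcc ⊢
      exact ⟨by linarith [htuIcc.2], by linarith [htuIcc.1]⟩
  -- translate `f t = m` into a bracket identity
  have hut : u t = m * v t := by
    have h1 : u t / v t = m := (hf t htI).symm.trans hft
    exact (div_eq_iff (hvpos t htI).ne').mp h1
  have hux : f x * v x = u x := by
    rw [hf x hx]; exact div_mul_cancel₀ _ (hvpos x hx).ne'
  have huy : f y * v y = u y := by
    rw [hf y hy]; exact div_mul_cancel₀ _ (hvpos y hy).ne'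
  have hm : m * (p₁ x + p₂ y) = p₁ x * f x + p₂ y * f y := div_mul_cancel₀ _ hden.ne'
  have hb1 := hbrf t htI x hx
  have hb2 := hbrf t htI y hy
  have keyD : Df * (p₁ x * v y * Sg γ (x - t) + p₂ y * v x * Sg γ (y - t)) = 0 := by
    linear_combination (-(p₁ x * v y)) * hb1 - (p₂ y * v x) * hb2 +
      (p₁ x * v y * v x + p₂ y * v x * v y) * hut + (p₁ x * v y * v t) * hux +
      (p₂ y * v x * v t) * huy + (v t * v x * v y) * hm
  have keyS : p₁ x * v y * Sg γ (x - t) + p₂ y * v x * Sg γ (y - t) = 0 :=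
    (mul_eq_zero.mp keyD).resolve_left hDf
  -- the corresponding identity for `g` at the reflected point
  have goalS : q₁ x * z y * Sg γ (x - (x + y - t)) + q₂ y * z x * Sg γ (y - (x + y - t)) = 0 := by
    have e1 : Sg γ (x - (x + y - t)) = - Sg γ (y - t) := by
      rw [show x - (x + y - t) = -(y - t) by ring, Sg_neg]
    have e2 : Sg γ (y - (x + y - t)) = - Sg γ (x - t) := by
      rw [show y - (x + y - t) = -(x - t) by ring, Sg_neg]
    have h1 := (hpq x hx).1
    have h2 := (hpq y hy).2
    have hmul : p₁ x * p₂ y *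
        (q₁ x * z y * Sg γ (x - (x + y - t)) + q₂ y * z x * Sg γ (y - (x + y - t))) = 0 := by
      rw [e1, e2]
      linear_combination (-(z x * z y)) * keyS - (p₂ y * z y * Sg γ (y - t)) * h1 -
        (p₁ x * z x * Sg γ (x - t)) * h2
    exact (mul_eq_zero.mp hmul).resolve_left (by positivity)
  have hb1g := hbrg (x + y - t) hsI x hx
  have hb2g := hbrg (x + y - t) hsI y hy
  have keyW : q₁ x * z y * (w (x + y - t) * z x - w x * z (x + y - t)) +
      q₂ y * z x * (w (x + y - t) * z y - w y * z (x + y - t)) = 0 := by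
    rw [hb1g, hb2g]
    linear_combination Dg * goalS
  have hgs : g (x + y - t) = (q₁ x * g x + q₂ y * g y) / (q₁ x + q₂ y) := by
    rw [hg (x + y - t) hsI, hg x hx, hg y hy]
    have hzs := (hzpos (x + y - t) hsI).ne'
    have hzx := (hzpos x hx).ne'
    have hzy := (hzpos y hy).ne'
    field_simp
    linear_combination keyW
  -- conclude via injectivity
  have hBf : bajMean I f p₁ p₂ x y = t := by
    have hex : ∃ a ∈ I, f a = m := ⟨t, htI, hft⟩
    have h1 := Function.invFunOn_eq hex
    have h2 := Function.invFunOn_mem hex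
    exact hinjf h2 htI (h1.trans hft.symm)
  have hBg : bajMean I g q₁ q₂ x y = x + y - t := by
    have hex : ∃ a ∈ I, g a = (q₁ x * g x + q₂ y * g y) / (q₁ x + q₂ y) :=
      ⟨x + y - t, hsI, hgs⟩
    have h1 := Function.invFunOn_eq hex
    have h2 := Function.invFunOn_mem hex
    exact hinjg h2 hsI (h1.trans hgs.symm)
  rw [hBf, hBg]
  ring
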